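/- Suppose the frequency function N(z₀,·) is nondecreasing on (0, r₀] and H'(z₀,r)/H(z₀,r) = (n+1)/r + N(z₀,r)/r. Then for 0 < r₁ < r₂ ≤ r₀: H(z₀,r₂) ≤ (r₂/r₁)^{N(z₀,r₂)+n+1} H(z₀,r₁) and H(z₀,r₂) ≥ (r₂/r₁)^{N(z₀,r₁)+n+1} H(z₀,r₁). -/
import Mathlib


open Set

/-- Generic log-comparison lemma: if on `Ioo r₁ r₂` the logarithmic derivative of `H`
is at most `c / r`, then `log (H r₂) - log (H r₁) ≤ c * (log r₂ - log r₁)`. -/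
lemma log_comp_le (n : ℕ) (r₀ : ℝ)
    (H N : ℝ → ℝ)
    (hHpos : ∀ r ∈ Set.Ioc (0:ℝ) r₀, 0 < H r)
    (hH' : ∀ r ∈ Set.Ioc (0:ℝ) r₀,
        HasDerivAt H (((n + 1 : ℝ) / r + N r / r) * H r) r)
    (c : ℝ) (r₁ r₂ : ℝ) (h1 : 0 < r₁) (h12 : r₁ < r₂) (h2 : r₂ ≤ r₀)
    (hc : ∀ r ∈ Set.Ioo r₁ r₂, N r + n + 1 ≤ c) :
    Real.log (H r₂) - Real.log (H r₁) ≤ c * (Real.log r₂ - Real.log r₁) := by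
  have hsub : Set.Icc r₁ r₂ ⊆ Set.Ioc (0:ℝ) r₀ := fun x hx =>
    ⟨lt_of_lt_of_le h1 hx.1, le_trans hx.2 h2⟩
  set φ : ℝ → ℝ := fun r => c * Real.log r - Real.log (H r) with hφ
  have hHcont : ContinuousOn H (Set.Icc r₁ r₂) := fun x hx =>
    ((hH' x (hsub hx)).continuousAt).continuousWithinAt
  have hφcont : ContinuousOn φ (Set.Icc r₁ r₂) := by
    apply ContinuousOn.sub
    · exact ContinuousOn.const_smul (Real.continuousOn_log.mono (fun x hx => by
        simp only [Set.mem_compl_iff, Set.mem_singleton_iff]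
        exact ne_of_gt (lt_of_lt_of_le h1 hx.1))) c
    · exact Real.continuousOn_log.comp hHcont (fun x hx => by
        simp only [Set.mem_compl_iff, Set.mem_singleton_iff]
        exact ne_of_gt (hHpos x (hsub hx)))
  have hint : interior (Set.Icc r₁ r₂) = Set.Ioo r₁ r₂ := interior_Icc
  have hmono : MonotoneOn φ (Set.Icc r₁ r₂) := by
    apply monotoneOn_of_hasDerivWithinAt_nonneg (convex_Icc r₁ r₂) hφcont
      (f' := fun r => c / r - ((n + 1 : ℝ) / r + N r / r))
    · intro x hx
      rw [hint] at hx
      have hx0 : 0 < x := lt_trans h1 hx.1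
      have hxm : x ∈ Set.Ioc (0:ℝ) r₀ := ⟨hx0, le_trans (le_of_lt hx.2) h2⟩
      have hd1 : HasDerivAt (fun r => c * Real.log r) (c / x) x := by
        simpa [div_eq_mul_inv] using (Real.hasDerivAt_log (ne_of_gt hx0)).const_mul c
      have hd2 : HasDerivAt (fun r => Real.log (H r))
          ((((n + 1 : ℝ) / x + N x / x) * H x) / H x) x :=
        (hH' x hxm).log (ne_of_gt (hHpos x hxm))
      have hd2' : HasDerivAt (fun r => Real.log (H r))
          ((n + 1 : ℝ) / x + N x / x) x := by
        rwa [mul_div_assoc, div_self (ne_of_gt (hHpos x hxm)), mul_one] at hd2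
      exact ((hd1.sub hd2').hasDerivWithinAt).mono interior_subset
    · intro x hx
      rw [hint] at hx
      have hx0 : 0 < x := lt_trans h1 hx.1
      have h := hc x hx
      have : c / x - ((n + 1 : ℝ) / x + N x / x) = (c - (N x + n + 1)) / x := by
        field_simp; ring
      rw [this]
      exact div_nonneg (sub_nonneg.2 h) (le_of_lt hx0)
  have key : φ r₁ ≤ φ r₂ :=
    hmono ⟨le_refl r₁, le_of_lt h12⟩ ⟨le_of_lt h12, le_refl r₂⟩ (le_of_lt h12)
  simp only [hφ] at key
  linarith


/-- Reverse direction: if the logarithmic derivative of `H` is at least `c / r` on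
`Ioo r₁ r₂`, then `c * (log r₂ - log r₁) ≤ log (H r₂) - log (H r₁)`. -/
lemma log_comp_ge (n : ℕ) (r₀ : ℝ)
    (H N : ℝ → ℝ)
    (hHpos : ∀ r ∈ Set.Ioc (0:ℝ) r₀, 0 < H r)
    (hH' : ∀ r ∈ Set.Ioc (0:ℝ) r₀,
        HasDerivAt H (((n + 1 : ℝ) / r + N r / r) * H r) r)
    (c : ℝ) (r₁ r₂ : ℝ) (h1 : 0 < r₁) (h12 : r₁ < r₂) (h2 : r₂ ≤ r₀)
    (hc : ∀ r ∈ Set.Ioo r₁ r₂, c ≤ N r + n + 1) :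
    c * (Real.log r₂ - Real.log r₁) ≤ Real.log (H r₂) - Real.log (H r₁) := by
  have hsub : Set.Icc r₁ r₂ ⊆ Set.Ioc (0:ℝ) r₀ := fun x hx =>
    ⟨lt_of_lt_of_le h1 hx.1, le_trans hx.2 h2⟩
  set φ : ℝ → ℝ := fun r => Real.log (H r) - c * Real.log r with hφ
  have hHcont : ContinuousOn H (Set.Icc r₁ r₂) := fun x hx =>
    ((hH' x (hsub hx)).continuousAt).continuousWithinAt
  have hφcont : ContinuousOn φ (Set.Icc r₁ r₂) := by
    apply ContinuousOn.sub
    · exact Real.continuousOn_log.comp hHcont (fun x hx => by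
        simp only [Set.mem_compl_iff, Set.mem_singleton_iff]
        exact ne_of_gt (hHpos x (hsub hx)))
    · exact ContinuousOn.const_smul (Real.continuousOn_log.mono (fun x hx => by
        simp only [Set.mem_compl_iff, Set.mem_singleton_iff]
        exact ne_of_gt (lt_of_lt_of_le h1 hx.1))) c
  have hint : interior (Set.Icc r₁ r₂) = Set.Ioo r₁ r₂ := interior_Icc
  have hmono : MonotoneOn φ (Set.Icc r₁ r₂) := by
    apply monotoneOn_of_hasDerivWithinAt_nonneg (convex_Icc r₁ r₂) hφcont
      (f' := fun r => ((n + 1 : ℝ) / r + N r / r) - c / r)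
    · intro x hx
      rw [hint] at hx
      have hx0 : 0 < x := lt_trans h1 hx.1
      have hxm : x ∈ Set.Ioc (0:ℝ) r₀ := ⟨hx0, le_trans (le_of_lt hx.2) h2⟩
      have hd1 : HasDerivAt (fun r => c * Real.log r) (c / x) x := by
        simpa [div_eq_mul_inv] using (Real.hasDerivAt_log (ne_of_gt hx0)).const_mul c
      have hd2 : HasDerivAt (fun r => Real.log (H r))
          ((((n + 1 : ℝ) / x + N x / x) * H x) / H x) x :=
        (hH' x hxm).log (ne_of_gt (hHpos x hxm))
      have hd2' : HasDerivAt (fun r => Real.log (H r))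
          ((n + 1 : ℝ) / x + N x / x) x := by
        rwa [mul_div_assoc, div_self (ne_of_gt (hHpos x hxm)), mul_one] at hd2
      exact ((hd2'.sub hd1).hasDerivWithinAt).mono interior_subset
    · intro x hx
      rw [hint] at hx
      have hx0 : 0 < x := lt_trans h1 hx.1
      have h := hc x hx
      have : ((n + 1 : ℝ) / x + N x / x) - c / x = ((N x + n + 1) - c) / x := by
        field_simp; ring
      rw [this]
      exact div_nonneg (sub_nonneg.2 h) (le_of_lt hx0)
  have key : φ r₁ ≤ φ r₂ :=
    hmono ⟨le_refl r₁, le_of_lt h12⟩ ⟨le_of_lt h12, le_refl r₂⟩ (le_of_lt h12)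
  simp only [hφ] at key
  linarith

/-- doubling inequalities from monotonicity of the frequency and
the logarithmic-derivative identity for H. -/
theorem stmt5 (n : ℕ) (r₀ : ℝ) (hr₀ : 0 < r₀)
    (H N : ℝ → ℝ)
    (hHpos : ∀ r ∈ Set.Ioc (0:ℝ) r₀, 0 < H r)
    (hH' : ∀ r ∈ Set.Ioc (0:ℝ) r₀,
        HasDerivAt H (((n + 1 : ℝ) / r + N r / r) * H r) r)
    (hNmono : MonotoneOn N (Set.Ioc (0:ℝ) r₀)) :
    ∀ r₁ r₂ : ℝ, 0 < r₁ → r₁ < r₂ → r₂ ≤ r₀ →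
      H r₂ ≤ (r₂ / r₁) ^ (N r₂ + n + 1) * H r₁ ∧
      (r₂ / r₁) ^ (N r₁ + n + 1) * H r₁ ≤ H r₂ := by
  intro r₁ r₂ h1 h12 h2
  have h1m : r₁ ∈ Set.Ioc (0:ℝ) r₀ := ⟨h1, le_trans (le_of_lt h12) h2⟩
  have h2m : r₂ ∈ Set.Ioc (0:ℝ) r₀ := ⟨lt_trans h1 h12, h2⟩
  have hH1 : 0 < H r₁ := hHpos r₁ h1m
  have hH2 : 0 < H r₂ := hHpos r₂ h2m
  have hdivpos : 0 < r₂ / r₁ := div_pos (lt_trans h1 h12) h1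
  have hlogdiff : Real.log (r₂ / r₁) = Real.log r₂ - Real.log r₁ :=
    Real.log_div (ne_of_gt (lt_trans h1 h12)) (ne_of_gt h1)
  constructor
  · -- upper bound: use c = N r₂ + n + 1
    have key := log_comp_le n r₀ H N hHpos hH' (N r₂ + n + 1) r₁ r₂ h1 h12 h2
      (fun r hr => by
        have hrm : r ∈ Set.Ioc (0:ℝ) r₀ := ⟨lt_trans h1 hr.1, le_trans (le_of_lt hr.2) h2⟩
        have := hNmono hrm h2m (le_of_lt hr.2)
        linarith)
    have hlog : Real.log (H r₂) ≤ Real.log ((r₂ / r₁) ^ (N r₂ + n + 1) * H r₁) := by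
      rw [Real.log_mul (ne_of_gt (Real.rpow_pos_of_pos hdivpos _)) (ne_of_gt hH1),
        Real.log_rpow hdivpos, hlogdiff]
      linarith
    calc H r₂ = Real.exp (Real.log (H r₂)) := (Real.exp_log hH2).symm
      _ ≤ Real.exp (Real.log ((r₂ / r₁) ^ (N r₂ + n + 1) * H r₁)) := Real.exp_le_exp.2 hlog
      _ = (r₂ / r₁) ^ (N r₂ + n + 1) * H r₁ :=
        Real.exp_log (mul_pos (Real.rpow_pos_of_pos hdivpos _) hH1)
  · -- lower bound: apply the lemma to H ∘ (neg reparametrization)? Use reverse comparison.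
    have key := log_comp_ge n r₀ H N hHpos hH' (N r₁ + n + 1) r₁ r₂ h1 h12 h2
      (fun r hr => by
        have hrm : r ∈ Set.Ioc (0:ℝ) r₀ := ⟨lt_trans h1 hr.1, le_trans (le_of_lt hr.2) h2⟩
        have := hNmono h1m hrm (le_of_lt hr.1)
        linarith)
    have hlog : Real.log ((r₂ / r₁) ^ (N r₁ + n + 1) * H r₁) ≤ Real.log (H r₂) := by
      rw [Real.log_mul (ne_of_gt (Real.rpow_pos_of_pos hdivpos _)) (ne_of_gt hH1),
        Real.log_rpow hdivpos, hlogdiff]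
      linarith
    calc (r₂ / r₁) ^ (N r₁ + n + 1) * H r₁
        = Real.exp (Real.log ((r₂ / r₁) ^ (N r₁ + n + 1) * H r₁)) :=
          (Real.exp_log (mul_pos (Real.rpow_pos_of_pos hdivpos _) hH1)).symm
      _ ≤ Real.exp (Real.log (H r₂)) := Real.exp_le_exp.2 hlog
      _ = H r₂ := Real.exp_log hH2
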